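/- S(2) = (ln(4π) - 1 - γ)/2, where S(a) = Σ_{n=1}^∞ [ln(n/a) - a/(2n) - ψ(n/a)], ψ is the digamma function, and γ is the Euler–Mascheroni constant. -/

import Mathlib

open Real

open Filter Topology Finset

local notation "γ" => Real.eulerMascheroniConstant

/-- The digamma function `ψ(x) = Γ'(x)/Γ(x) = d(log Γ)/dx`. -/
noncomputable def digamma (x : ℝ) : ℝ := deriv (fun y : ℝ => Real.log (Real.Gamma y)) x

/-- `S(a) = Σ_{n=1}^∞ [ln(n/a) - a/(2n) - ψ(n/a)]`. -/
noncomputable def S (a : ℝ) : ℝ :=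
  ∑' n : ℕ+, (Real.log ((n : ℝ) / a) - a / (2 * (n : ℝ)) - digamma ((n : ℝ) / a))

lemma diffGamma {x : ℝ} (hx : 0 < x) : DifferentiableAt ℝ Real.Gamma x :=
  Real.differentiableAt_Gamma fun m => by
    have : (0:ℝ) ≤ m := m.cast_nonneg
    intro h; rw [h] at hx; linarith

lemma digamma_eq {x : ℝ} (hx : 0 < x) : digamma x = deriv Real.Gamma x / Real.Gamma x := by
  unfold digamma
  rw [deriv.log (diffGamma hx) (Real.Gamma_pos_of_pos hx).ne']

lemma diffLogGamma {x : ℝ} (hx : 0 < x) :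
    DifferentiableAt ℝ (fun y : ℝ => Real.log (Real.Gamma y)) x :=
  (diffGamma hx).log (Real.Gamma_pos_of_pos hx).ne'

lemma digamma_add_one {x : ℝ} (hx : 0 < x) : digamma (x + 1) = digamma x + 1 / x := by
  unfold digamma
  rw [← deriv_comp_add_const, one_div, ← Real.deriv_log,
    ← deriv_add (diffLogGamma hx) (Real.differentiableAt_log hx.ne')]
  apply Filter.EventuallyEq.deriv_eq
  filter_upwards [eventually_gt_nhds hx] with y hy
  rw [Real.Gamma_add_one hy.ne', Real.log_mul hy.ne' (Real.Gamma_pos_of_pos hy).ne', add_comm]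
  rfl

lemma digamma_nat (n : ℕ) : digamma (n + 1) = -γ + harmonic n := by
  rw [digamma_eq (by positivity), Real.deriv_Gamma_nat n, Real.Gamma_nat_eq_factorial,
    mul_div_assoc]
  rw [mul_div_assoc'] at *
  rw [mul_div_cancel_left₀ _ (by positivity : ((n.factorial : ℝ)) ≠ 0)]

lemma digamma_half : digamma (1 / 2) = -γ - 2 * Real.log 2 := by
  rw [digamma_eq one_half_pos, Real.hasDerivAt_Gamma_one_half.deriv, Real.Gamma_one_half_eq,
    neg_mul, neg_div]
  rw [mul_comm, mul_div_assoc, div_self (Real.sqrt_pos.mpr Real.pi_pos).ne', mul_one]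
  ring

lemma digamma_nat_add_half (m : ℕ) :
    digamma (m + 1 / 2) = -γ - 2 * Real.log 2 + 2 * (harmonic (2 * m) : ℝ) - harmonic m := by
  induction m with
  | zero =>
    have : ((0:ℕ):ℝ) + 1/2 = 1/2 := by norm_num
    rw [this, digamma_half]; simp
  | succ k ih =>
    have h : ((k : ℝ) + 1) + 1 / 2 = ((k : ℝ) + 1 / 2) + 1 := by ring
    have hk : (0 : ℝ) < (k : ℝ) + 1 / 2 := by positivity
    push_cast
    rw [h, digamma_add_one hk, ih]
    have h2 : 2 * (k + 1) = (2 * k + 1) + 1 := by ring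
    rw [h2, harmonic_succ, harmonic_succ, harmonic_succ]
    push_cast
    have h3 : (k : ℝ) + 1/2 ≠ 0 := by positivity
    field_simp
    ring

/-- trapezoid bound : `log x ≤ (x - x⁻¹)/2` for `x ≥ 1`. -/
lemma log_le_half_sub_inv {x : ℝ} (hx : 1 ≤ x) : Real.log x ≤ (x - x⁻¹) / 2 := by
  have h0 : 0 < x := lt_of_lt_of_le one_pos hx
  rw [← Real.sinh_log h0]
  rcases eq_or_lt_of_le (Real.log_nonneg hx) with h | h
  · rw [← h]; simp
  · exact (Real.self_lt_sinh_iff.mpr h).le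

/-- midpoint bound : `2x/(2+x) ≤ log (1+x)` for `x ≥ 0`. -/
lemma midpoint_le_log {x : ℝ} (hx : 0 ≤ x) : 2 * x / (2 + x) ≤ Real.log (1 + x) := by
  have key : MonotoneOn (fun y : ℝ => Real.log (1 + y) + 4 * (2 + y)⁻¹) (Set.Ici 0) := by
    apply monotoneOn_of_deriv_nonneg (convex_Ici 0)
    · apply ContinuousOn.add
      · exact (continuousOn_const.add continuousOn_id).log fun y hy => by
          simp only [Set.mem_Ici] at hy; show (1:ℝ) + y ≠ 0; positivity
      · exact continuousOn_const.mul ((continuousOn_const.add continuousOn_id).inv₀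
          fun y hy => by simp only [Set.mem_Ici] at hy; show (2:ℝ) + y ≠ 0; positivity)
    · intro y hy
      rw [interior_Ici] at hy
      simp only [Set.mem_Ioi] at hy
      have h1 : (0:ℝ) < 1 + y := by linarith
      have h2 : (0:ℝ) < 2 + y := by linarith
      have hd1 : HasDerivAt (fun y : ℝ => Real.log (1 + y)) (1 + y)⁻¹ y := by
        simpa using ((hasDerivAt_id y).const_add 1).log h1.ne'
      have hd2 : HasDerivAt (fun y : ℝ => 4 * (2 + y)⁻¹) (4 * (-(1) / (2 + y) ^ 2)) y := by
        exact (((hasDerivAt_id y).const_add 2).inv h2.ne').const_mul 4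
      apply DifferentiableAt.differentiableWithinAt
      exact (hd1.add hd2).differentiableAt
    · intro y hy
      rw [interior_Ici] at hy
      simp only [Set.mem_Ioi] at hy
      have h1 : (0:ℝ) < 1 + y := by linarith
      have h2 : (0:ℝ) < 2 + y := by linarith
      have hd1 : HasDerivAt (fun y : ℝ => Real.log (1 + y)) (1 + y)⁻¹ y := by
        simpa using ((hasDerivAt_id y).const_add 1).log h1.ne'
      have hd2 : HasDerivAt (fun y : ℝ => 4 * (2 + y)⁻¹) (4 * (-(1) / (2 + y) ^ 2)) y := by
        exact (((hasDerivAt_id y).const_add 2).inv h2.ne').const_mul 4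
      rw [show deriv (fun y : ℝ => Real.log (1 + y) + 4 * (2 + y)⁻¹) y = _ from (hd1.add hd2).deriv]
      have : (1 + y)⁻¹ + 4 * (-1 / (2 + y) ^ 2) = y ^ 2 / ((1 + y) * (2 + y) ^ 2) := by
        field_simp; ring
      rw [this]; positivity
  have h := key (Set.mem_Ici.mpr le_rfl) (Set.mem_Ici.mpr hx) hx
  simp only [add_zero, Real.log_one, zero_add] at h
  have h2 : (0:ℝ) < 2 + x := by linarith
  have : 4 * (2 + x)⁻¹ = 4 / (2 + x) := by ring
  rw [this] at h
  rw [div_le_iff₀ h2]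
  have h4 : 4 / (2 + x) * (2 + x) = 4 := by field_simp
  nlinarith [h]

lemma tendsto_inv_shift : Filter.Tendsto (fun k : ℕ => 1 / (2 * ((k : ℝ) + 1))) atTop (𝓝 0) := by
  have h := tendsto_one_div_add_atTop_nhds_zero_nat.const_mul (1/2 : ℝ)
  rw [mul_zero] at h
  exact h.congr (fun k => by rw [one_div, one_div, one_div, mul_inv]; try ring)

lemma tendsto_inv_shift2 : Filter.Tendsto (fun k : ℕ => 1 / (2 * ((k : ℝ) + 1 + 1))) atTop (𝓝 0) := by
  have h := tendsto_inv_shift.comp (Filter.tendsto_add_atTop_nat 1)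
  exact h.congr (fun k => by
    show (1:ℝ) / (2 * ((((k+1) : ℕ)  : ℝ) + 1)) = 1 / (2 * ((k : ℝ) + 1 + 1))
    push_cast; ring)

lemma tendsto_hsl_shift :
    Filter.Tendsto (fun k : ℕ => (harmonic (k+1) : ℝ) - Real.log ((k:ℝ)+1)) atTop (𝓝 γ) := by
  have h := Real.tendsto_harmonic_sub_log.comp (Filter.tendsto_add_atTop_nat 1)
  exact h.congr (fun k => by
    show (harmonic (k+1) : ℝ) - Real.log (((k+1 : ℕ)):ℝ) = _
    push_cast; ring_nf)

lemma harmonic_sub_log_le (m : ℕ) (hm : 1 ≤ m) :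
    (harmonic m : ℝ) - Real.log m - γ ≤ 1 / (2 * m) := by
  obtain ⟨k, rfl⟩ := Nat.exists_eq_add_of_le hm
  set A : ℕ → ℝ := fun k => (harmonic (k+1) : ℝ) - Real.log ((k:ℝ)+1) - 1 / (2 * ((k:ℝ)+1)) with hA
  have hmono : Monotone A := by
    apply monotone_nat_of_le_succ
    intro k
    have hr : (0:ℝ) < (k:ℝ) + 1 := by positivity
    have hs : (0:ℝ) < (k:ℝ) + 1 + 1 := by positivity
    have hlog : Real.log ((k:ℝ)+1+1) - Real.log ((k:ℝ)+1)
        ≤ 1 / (2*((k:ℝ)+1+1)) + 1 / (2*((k:ℝ)+1)) := by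
      have h := log_le_half_sub_inv (x := ((k:ℝ)+1+1)/((k:ℝ)+1))
        (by rw [le_div_iff₀ hr]; linarith)
      rw [Real.log_div hs.ne' hr.ne'] at h
      refine h.trans (le_of_eq ?_)
      rw [inv_div]
      field_simp
      ring
    simp only [hA]
    have hh : harmonic (k+1+1) = harmonic (k+1) + ((k:ℚ)+1+1)⁻¹ := by
      rw [harmonic_succ]; push_cast; ring
    push_cast [hh]
    have e : ((k:ℝ)+1+1)⁻¹ - 1/(2*((k:ℝ)+1+1)) = 1/(2*((k:ℝ)+1+1)) := by
      field_simp; ring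
    linarith
  have htend : Filter.Tendsto A atTop (𝓝 γ) := by
    have h := tendsto_hsl_shift.sub tendsto_inv_shift
    rw [sub_zero] at h
    exact h.congr (fun k => rfl)
  have hle := hmono.ge_of_tendsto htend k
  simp only [hA] at hle
  rw [show (1:ℕ)+k = k+1 by omega]
  push_cast at hle ⊢
  linarith

lemma le_harmonic_sub_log (m : ℕ) (hm : 1 ≤ m) :
    1 / (2 * ((m:ℝ) + 1)) ≤ (harmonic m : ℝ) - Real.log m - γ := by
  obtain ⟨k, rfl⟩ := Nat.exists_eq_add_of_le hm
  set B : ℕ → ℝ := fun k => (harmonic (k+1) : ℝ) - Real.log ((k:ℝ)+1) - 1 / (2 * ((k:ℝ)+1+1))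
    with hB
  have hanti : Antitone B := by
    apply antitone_nat_of_succ_le
    intro k
    have hr : (0:ℝ) < (k:ℝ) + 1 := by positivity
    have hs : (0:ℝ) < (k:ℝ) + 1 + 1 := by positivity
    have hlog : 2 / (2*((k:ℝ)+1)+1) ≤ Real.log ((k:ℝ)+1+1) - Real.log ((k:ℝ)+1) := by
      have h := midpoint_le_log (x := 1/((k:ℝ)+1)) (by positivity)
      have e1 : 1 + 1/((k:ℝ)+1) = ((k:ℝ)+1+1)/((k:ℝ)+1) := by field_simp
      rw [e1, Real.log_div hs.ne' hr.ne'] at h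
      refine le_trans (le_of_eq ?_) h
      field_simp
    have hpoly : ((k:ℝ)+1+1)⁻¹ + 1/(2*((k:ℝ)+1+1)) - 1/(2*((k:ℝ)+1+1+1))
        ≤ 2 / (2*((k:ℝ)+1)+1) := by
      have e : ((k:ℝ)+1+1)⁻¹ + 1/(2*((k:ℝ)+1+1)) - 1/(2*((k:ℝ)+1+1+1))
          = (2*(k:ℝ)+7) / (2*(((k:ℝ)+2)*((k:ℝ)+3))) := by
        field_simp
        ring
      rw [e, div_le_div_iff₀ (by positivity) (by positivity)]
      nlinarith [sq_nonneg (k:ℝ)]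
    simp only [hB]
    have hh : harmonic (k+1+1) = harmonic (k+1) + ((k:ℚ)+1+1)⁻¹ := by
      rw [harmonic_succ]; push_cast; ring
    push_cast [hh]
    linarith
  have htend : Filter.Tendsto B atTop (𝓝 γ) := by
    have h := tendsto_hsl_shift.sub tendsto_inv_shift2
    rw [sub_zero] at h
    exact h.congr (fun k => rfl)
  have hle := hanti.le_of_tendsto htend k
  simp only [hB] at hle
  rw [show (1:ℕ)+k = k+1 by omega]
  push_cast at hle ⊢
  linarith

/-- the summand for `a = 2`, as a function of `n : ℕ`. -/
noncomputable def tt (n : ℕ) : ℝ :=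
  Real.log ((n : ℝ) / 2) - 2 / (2 * (n : ℝ)) - digamma ((n : ℝ) / 2)

lemma tt_even (k : ℕ) :
    tt (2 * (k+1)) = 1 / (2*((k:ℝ)+1)) - ((harmonic (k+1) : ℝ) - Real.log ((k:ℝ)+1) - γ) := by
  unfold tt
  have h1 : ((2 * (k+1) : ℕ) : ℝ) / 2 = (k:ℝ) + 1 := by push_cast; ring
  rw [h1, show ((k:ℝ) + 1) = ((k:ℝ)) + 1 from rfl, digamma_nat k]
  have hh : harmonic (k+1) = harmonic k + ((k:ℚ)+1)⁻¹ := by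
    rw [harmonic_succ]; push_cast; ring
  push_cast [hh]
  have h3 : (0:ℝ) < (k:ℝ) + 1 := by positivity
  field_simp
  ring

lemma tt_odd (k : ℕ) :
    tt (2 * k + 1) = Real.log (2*(k:ℝ)+1) - Real.log 2 - 1/(2*(k:ℝ)+1)
      - (-γ - 2 * Real.log 2 + 2 * (harmonic (2*k) : ℝ) - (harmonic k : ℝ)) := by
  unfold tt
  have h1 : ((2 * k + 1 : ℕ) : ℝ) / 2 = (k:ℝ) + 1/2 := by push_cast; ring
  rw [h1, digamma_nat_add_half k]
  have h2 : ((2 * k + 1 : ℕ) : ℝ) = 2*(k:ℝ)+1 := by push_cast; ring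
  rw [h2]
  have h3 : (0:ℝ) < 2*(k:ℝ)+1 := by positivity
  rw [show (k:ℝ)+1/2 = (2*(k:ℝ)+1) * (1/2) by ring,
    Real.log_mul h3.ne' (by norm_num), Real.log_div one_ne_zero two_ne_zero, Real.log_one]
  field_simp
  ring

lemma eps_up (m : ℕ) (hm : 1 ≤ m) :
    (harmonic m : ℝ) - Real.log m - γ ≤ 1 / (2 * (m:ℝ)) := harmonic_sub_log_le m hm

lemma tt_even_bound (k : ℕ) : |tt (2 * (k+1))| ≤ 5 / ((2*((k:ℝ)+1))^2) := by
  have h1 := harmonic_sub_log_le (k+1) (by omega)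
  have h2 := le_harmonic_sub_log (k+1) (by omega)
  push_cast at h1 h2
  rw [tt_even]
  have hy : (1:ℝ) ≤ (k:ℝ)+1 := by nlinarith [k.cast_nonneg (α:=ℝ)]
  have key : 1/(2*((k:ℝ)+1)) - 1/(2*((k:ℝ)+1+1)) ≤ 5 / ((2*((k:ℝ)+1))^2) := by
    rw [← sub_nonneg]
    have e : 5 / ((2*((k:ℝ)+1))^2) - (1/(2*((k:ℝ)+1)) - 1/(2*((k:ℝ)+1+1)))
        = (3*((k:ℝ)+1)+5) / (4*((k:ℝ)+1)^2*((k:ℝ)+1+1)) := by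
      field_simp
      ring
    rw [e]
    apply div_nonneg (by linarith) (by positivity)
  rw [abs_le]
  constructor
  · have : (0:ℝ) ≤ 5 / ((2*((k:ℝ)+1))^2) := by positivity
    linarith
  · linarith

lemma tt_one : tt 1 = γ + Real.log 2 - 1 := by
  have h := tt_odd 0
  norm_num at h
  rw [h]; ring

lemma tt_odd_bound (k : ℕ) (hk : 1 ≤ k) : |tt (2*k+1)| ≤ 5 / ((2*(k:ℝ)+1)^2) := by
  have hx : (1:ℝ) ≤ (k:ℝ) := by exact_mod_cast hk
  have hk0 : ((k:ℝ)) ≠ 0 := by linarith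
  have key : tt (2*k+1) = (Real.log (2*(k:ℝ)+1) - Real.log (2*(k:ℝ)) - 1/(2*(k:ℝ)+1))
      - 2*((harmonic (2*k):ℝ) - Real.log (2*(k:ℝ)) - γ)
      + ((harmonic k:ℝ) - Real.log k - γ) := by
    rw [tt_odd, show (2:ℝ)*(k:ℝ) = 2 * (k:ℝ) from rfl, Real.log_mul two_ne_zero hk0]
    ring
  have hL1 : Real.log (2*(k:ℝ)+1) - Real.log (2*(k:ℝ)) ≤ 1/(2*(k:ℝ)) := by
    have h := Real.log_le_sub_one_of_pos (x := (2*(k:ℝ)+1)/(2*(k:ℝ))) (by positivity)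
    rw [Real.log_div (by positivity) (by positivity)] at h
    refine h.trans (le_of_eq ?_)
    field_simp
    ring
  have hL2 : 1/(2*(k:ℝ)+1) ≤ Real.log (2*(k:ℝ)+1) - Real.log (2*(k:ℝ)) := by
    have h := Real.log_le_sub_one_of_pos (x := (2*(k:ℝ))/(2*(k:ℝ)+1)) (by positivity)
    rw [Real.log_div (by positivity) (by positivity)] at h
    have e : (2*(k:ℝ))/(2*(k:ℝ)+1) - 1 = -(1/(2*(k:ℝ)+1)) := by
      field_simp
      ring
    rw [e] at h
    linarith
  have hE2u := harmonic_sub_log_le (2*k) (by omega)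
  have hE2l := le_harmonic_sub_log (2*k) (by omega)
  have hE1u := harmonic_sub_log_le k hk
  have hE1l := le_harmonic_sub_log k hk
  push_cast at hE2u hE2l hE1u hE1l
  -- atom normalizations
  have e1 : 1/(2*(2*(k:ℝ))) = 1/(4*(k:ℝ)) := by ring_nf
  have e2 : 1/(2*(2*(k:ℝ)+1)) = 1/(2*(2*(k:ℝ)+1)) := rfl
  rw [abs_le]
  constructor
  · -- lower bound
    have hcomb : -(1/(2*(k:ℝ))) + 1/(2*((k:ℝ)+1)) ≤ tt (2*k+1) := by
      rw [key]
      have : 2*((harmonic (2*k):ℝ) - Real.log (2*(k:ℝ)) - γ) ≤ 2*(1/(2*(2*(k:ℝ)))) := by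
        linarith
      have e3 : 2*(1/(2*(2*(k:ℝ)))) = 1/(2*(k:ℝ)) := by
        field_simp
      linarith
    refine le_trans ?_ hcomb
    rw [← sub_nonneg]
    have e : (-(1/(2*(k:ℝ))) + 1/(2*((k:ℝ)+1))) - (-(5 / ((2*(k:ℝ)+1)^2)))
        = (6*(k:ℝ)^2 + 6*(k:ℝ) - 1) / ((2*(k:ℝ))*((k:ℝ)+1)*((2*(k:ℝ)+1)^2)) := by
      field_simp
      ring
    rw [e]
    apply div_nonneg (by nlinarith) (by positivity)
  · -- upper bound
    have hcomb : tt (2*k+1) ≤ 1/(2*(k:ℝ)) - 1/(2*(k:ℝ)+1) - 1/(2*(k:ℝ)+1) + 1/(2*(k:ℝ)) := by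
      rw [key]
      have : 2*(1/(2*(2*(k:ℝ)+1))) ≤ 2*((harmonic (2*k):ℝ) - Real.log (2*(k:ℝ)) - γ) := by
        linarith
      have e3 : 2*(1/(2*(2*(k:ℝ)+1))) = 1/(2*(k:ℝ)+1) := by
        field_simp
      linarith
    refine hcomb.trans ?_
    rw [← sub_nonneg]
    have e : 5 / ((2*(k:ℝ)+1)^2) - (1/(2*(k:ℝ)) - 1/(2*(k:ℝ)+1) - 1/(2*(k:ℝ)+1) + 1/(2*(k:ℝ)))
        = (3*(k:ℝ) - 1) / ((k:ℝ)*((2*(k:ℝ)+1)^2)) := by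
      field_simp
      ring
    rw [e]
    apply div_nonneg (by nlinarith) (by positivity)

lemma summable_tt : Summable (fun k : ℕ => tt (k+1)) := by
  have hmaj : Summable (fun k : ℕ => 5 / ((k:ℝ)+1)^2) := by
    have h : Summable (fun n : ℕ => 5 * (1 / (n:ℝ)^2)) :=
      (Real.summable_one_div_nat_pow.mpr one_lt_two).mul_left 5
    have h2 := (summable_nat_add_iff 1).mpr h
    exact h2.congr (fun k => by push_cast; ring)
  apply Summable.of_norm_bounded hmaj
  intro k
  rw [Real.norm_eq_abs]
  rcases Nat.even_or_odd k with ⟨m, rfl⟩ | ⟨m, rfl⟩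
  · -- k = m + m, k+1 = 2m+1 odd
    have hk : m + m + 1 = 2*m+1 := by ring
    rw [hk]
    rcases Nat.eq_zero_or_pos m with rfl | hm
    · rw [show 2*0+1 = 1 by norm_num, tt_one]
      have h1 := Real.eulerMascheroniConstant_lt_two_thirds
      have h2 := Real.one_half_lt_eulerMascheroniConstant
      have h3 : Real.log 2 ≤ 1 := by
        have := Real.log_le_sub_one_of_pos (x := 2) (by norm_num); linarith
      have h4 : (0:ℝ) ≤ Real.log 2 := Real.log_nonneg (by norm_num)
      rw [abs_le]
      push_cast
      constructor <;> [nlinarith; nlinarith]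
    · refine (tt_odd_bound m hm).trans ?_
      have hm1 : (1:ℝ) ≤ (m:ℝ) := by exact_mod_cast hm
      have e : ((m + m : ℕ) : ℝ) + 1 = 2*(m:ℝ)+1 := by push_cast; ring
      rw [e]
  · -- k = 2m+1, k+1 = 2(m+1) even
    have hk : 2*m+1+1 = 2*(m+1) := by ring
    rw [hk]
    refine (tt_even_bound m).trans ?_
    have e : ((2*m+1 : ℕ) : ℝ) + 1 = 2*((m:ℝ)+1) := by push_cast; ring
    rw [e]

lemma psum (N : ℕ) : ∑ k ∈ Finset.range (2*N), tt (k+1)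
    = Real.log ((2*N).factorial) - (harmonic N : ℝ)/2 + 2*(N:ℝ) + 2*(N:ℝ)*γ
      - 2*(N:ℝ)*(harmonic (2*N):ℝ) := by
  induction N with
  | zero => simp
  | succ N ih =>
    have hr : 2*(N+1) = (2*N) + 1 + 1 := by ring
    rw [hr, Finset.sum_range_succ, Finset.sum_range_succ, ih, tt_odd N,
      show (2*N+1+1) = 2*(N+1) by ring, tt_even N]
    have hf1 : ((2*(N+1)).factorial : ℝ)
        = ((2*N+1+1 : ℕ):ℝ) * (((2*N+1 : ℕ)):ℝ) * ((2*N).factorial : ℝ) := by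
      rw [show 2*(N+1) = (2*N+1)+1 by ring, Nat.factorial_succ, Nat.factorial_succ]
      push_cast; ring
    rw [hf1, Real.log_mul (by positivity) (by positivity),
      Real.log_mul (by positivity) (by positivity)]
    have hh1 : (harmonic (N+1) : ℝ) = (harmonic N : ℝ) + ((N:ℝ)+1)⁻¹ := by
      rw [harmonic_succ]; push_cast; ring
    have hh2 : (harmonic (2*(N+1)) : ℝ) = (harmonic (2*N) : ℝ)
        + (2*(N:ℝ)+1)⁻¹ + (2*(N:ℝ)+2)⁻¹ := by
      rw [show 2*(N+1) = (2*N+1)+1 by ring, harmonic_succ, harmonic_succ]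
      push_cast; ring
    rw [hh1, hh2]
    push_cast
    have hlog : Real.log (2*(N:ℝ)+1+1) = Real.log 2 + Real.log ((N:ℝ)+1) := by
      rw [show 2*(N:ℝ)+1+1 = 2*((N:ℝ)+1) by ring,
        Real.log_mul two_ne_zero (by positivity)]
    rw [hlog]
    have h1 : (0:ℝ) < (N:ℝ)+1 := by positivity
    have h2 : (0:ℝ) < 2*(N:ℝ)+1 := by positivity
    field_simp
    ring

lemma psum' (N : ℕ) (hN : 1 ≤ N) : ∑ k ∈ Finset.range (2*N), tt (k+1)
    = Real.log (Stirling.stirlingSeq (2*N)) + Real.log 2 - γ/2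
      - ((harmonic N : ℝ) - Real.log N - γ)/2
      - 2*(N:ℝ)*((harmonic (2*N):ℝ) - Real.log (2*(N:ℝ)) - γ) := by
  rw [psum N]
  have h0 : (0:ℝ) < (N:ℝ) := by exact_mod_cast hN
  have hfac := Stirling.log_stirlingSeq_formula (2*N)
  have hc : ((2*N : ℕ) : ℝ) = 2*(N:ℝ) := by push_cast; ring
  rw [hc] at hfac
  have hlog1 : Real.log (2*(2*(N:ℝ))) = Real.log 2 + Real.log 2 + Real.log (N:ℝ) := by
    rw [show 2*(2*(N:ℝ)) = 2*(2*(N:ℝ)) by ring, Real.log_mul two_ne_zero (by positivity),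
      Real.log_mul two_ne_zero h0.ne']
    ring
  have hlog2 : Real.log (2*(N:ℝ) / Real.exp 1) = Real.log (2*(N:ℝ)) - 1 := by
    rw [Real.log_div (by positivity) (Real.exp_ne_zero 1), Real.log_exp]
  rw [hlog1, hlog2] at hfac
  have hlog3 : Real.log (2*(N:ℝ)) = Real.log 2 + Real.log (N:ℝ) :=
    Real.log_mul two_ne_zero h0.ne'
  have : Real.log ((2*N).factorial : ℝ) = Real.log (Stirling.stirlingSeq (2*N))
      + 1/2 * (Real.log 2 + Real.log 2 + Real.log (N:ℝ))
      + 2*(N:ℝ) * (Real.log (2*(N:ℝ)) - 1) := by linarith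
  rw [this, hlog3]
  ring

lemma c1 : Filter.Tendsto (fun N : ℕ => 2*N) atTop atTop :=
  Filter.tendsto_atTop_mono (f := id) (fun n => by simp only [id]; omega) Filter.tendsto_id

lemma tendsto_small : Filter.Tendsto (fun N : ℕ => 1/(2*(2*(N:ℝ)+1))) atTop (𝓝 0) := by
  apply squeeze_zero (fun N => by positivity)
    (g := fun N : ℕ => 1/((N:ℝ)+1))
  · intro N
    apply one_div_le_one_div_of_le (by positivity)
    have : (0:ℝ) ≤ (N:ℝ) := N.cast_nonneg
    linarith
  · exact tendsto_one_div_add_atTop_nhds_zero_nat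

lemma tendsto_h3 : Filter.Tendsto
    (fun N : ℕ => 2*(N:ℝ)*((harmonic (2*N):ℝ) - Real.log (2*(N:ℝ)) - γ)) atTop (𝓝 (1/2)) := by
  apply tendsto_of_tendsto_of_tendsto_of_le_of_le'
    (g := fun N : ℕ => 1/2 - 1/(2*(2*(N:ℝ)+1))) (h := fun _ : ℕ => (1/2 : ℝ))
  · have h := (tendsto_const_nhds (x := (1/2:ℝ)) (f := atTop (α := ℕ))).sub tendsto_small
    rw [sub_zero] at h
    exact h
  · exact tendsto_const_nhds
  · filter_upwards [Filter.eventually_ge_atTop 1] with N hN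
    have hN' : (1:ℝ) ≤ (N:ℝ) := by exact_mod_cast hN
    have hb := le_harmonic_sub_log (2*N) (by omega)
    push_cast at hb
    have h2 : 2*(N:ℝ)*(1/(2*(2*(N:ℝ)+1))) ≤ 2*(N:ℝ)*((harmonic (2*N):ℝ) - Real.log (2*(N:ℝ)) - γ) :=
      mul_le_mul_of_nonneg_left hb (by positivity)
    have e : 2*(N:ℝ)*(1/(2*(2*(N:ℝ)+1))) = 1/2 - 1/(2*(2*(N:ℝ)+1)) := by
      field_simp
      ring
    linarith
  · filter_upwards [Filter.eventually_ge_atTop 1] with N hN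
    have hN' : (1:ℝ) ≤ (N:ℝ) := by exact_mod_cast hN
    have hb := harmonic_sub_log_le (2*N) (by omega)
    push_cast at hb
    have h2 : 2*(N:ℝ)*((harmonic (2*N):ℝ) - Real.log (2*(N:ℝ)) - γ) ≤ 2*(N:ℝ)*(1/(2*(2*(N:ℝ)))) :=
      mul_le_mul_of_nonneg_left hb (by positivity)
    have e : 2*(N:ℝ)*(1/(2*(2*(N:ℝ)))) = 1/2 := by
      have : (N:ℝ) ≠ 0 := by linarith
      field_simp
    linarith

lemma tendsto_psum : Filter.Tendsto (fun N : ℕ => ∑ k ∈ Finset.range (2*N), tt (k+1)) atTop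
    (𝓝 (Real.log (Real.sqrt π) + Real.log 2 - γ/2 - 1/2)) := by
  have h1 : Filter.Tendsto (fun N : ℕ => Real.log (Stirling.stirlingSeq (2*N))) atTop
      (𝓝 (Real.log (Real.sqrt π))) := by
    have hc : ContinuousAt Real.log (Real.sqrt π) :=
      Real.continuousAt_log (Real.sqrt_pos.mpr Real.pi_pos).ne'
    exact (hc.tendsto.comp Stirling.tendsto_stirlingSeq_sqrt_pi).comp c1
  have h2 : Filter.Tendsto (fun N : ℕ => ((harmonic N : ℝ) - Real.log N - γ)/2) atTop (𝓝 0) := by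
    have h := (Real.tendsto_harmonic_sub_log.sub_const γ).div_const 2
    rw [sub_self, zero_div] at h
    exact h.congr (fun N => by ring)
  have h3 := tendsto_h3
  have hcomb := ((h1.add (tendsto_const_nhds (x := Real.log 2 - γ/2))).sub h2).sub h3
  rw [sub_zero] at hcomb
  have he : Real.log (Real.sqrt π) + (Real.log 2 - γ/2) - 1/2
      = Real.log (Real.sqrt π) + Real.log 2 - γ/2 - 1/2 := by ring
  rw [he] at hcomb
  apply Filter.Tendsto.congr' ?_ hcomb
  filter_upwards [Filter.eventually_ge_atTop 1] with N hN
  rw [psum' N hN]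
  ring

theorem S_two :
    S 2 = (Real.log (4 * π) - 1 - Real.eulerMascheroniConstant) / 2 := by
  have hS : S 2 = ∑' k : ℕ, tt (k+1) := by
    unfold S
    rw [← Equiv.tsum_eq (Equiv.pnatEquivNat.symm)
      (f := fun n : ℕ+ => Real.log ((n:ℝ)/2) - 2/(2*(n:ℝ)) - digamma ((n:ℝ)/2))]
    apply tsum_congr
    intro k
    have hc : (((Equiv.pnatEquivNat.symm k) : ℕ+) : ℝ) = (k:ℝ)+1 := by
      simp [Equiv.pnatEquivNat]
    rw [tt, hc]
    push_cast
    ring_nf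
  have h' := summable_tt.hasSum.tendsto_sum_nat.comp c1
  have h'' : Filter.Tendsto (fun N : ℕ => ∑ k ∈ Finset.range (2*N), tt (k+1)) atTop
      (𝓝 (∑' k : ℕ, tt (k+1))) := h'
  have hval := tendsto_nhds_unique h'' tendsto_psum
  rw [hS, hval, Real.log_sqrt Real.pi_pos.le,
    Real.log_mul (by norm_num) Real.pi_pos.ne', show (4:ℝ) = 2^2 by norm_num, Real.log_pow]
  push_cast
  ring
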